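/- Let k^{abc} be a Killing 3-tensor on ℝ^n. Then the vector field v^a = ∂_r ∂_s k^{rsa} (the double divergence of k) is a Killing vector field, i.e. ∂^a v^b + ∂^b v^a = 0. -/

import Mathlib

noncomputable section

/-- Partial derivative `∂_a f` in the `a`-th coordinate direction on `ℝⁿ`. -/
def pd {n : ℕ} (a : Fin n) (f : (Fin n → ℝ) → ℝ) : (Fin n → ℝ) → ℝ :=
  fun x => fderiv ℝ f x (Pi.single a 1)

/-- Raised partial derivative `∂^a f = g^{ab} ∂_b f`. -/
def pdUp {n : ℕ} (ginv : Matrix (Fin n) (Fin n) ℝ) (a : Fin n)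
    (f : (Fin n → ℝ) → ℝ) : (Fin n → ℝ) → ℝ :=
  fun x => ∑ b, ginv a b * pd b f x

/-- Laplace operator `Δ f = g^{ab} ∂_a ∂_b f`. -/
def lap {n : ℕ} (ginv : Matrix (Fin n) (Fin n) ℝ) (f : (Fin n → ℝ) → ℝ) :
    (Fin n → ℝ) → ℝ :=
  fun x => ∑ a, ∑ b, ginv a b * pd a (pd b f) x

/-- Iterated partial derivative `∂_{i 0} ⋯ ∂_{i (m-1)} f` along a tuple of indices. -/
def pdIter {n : ℕ} : (m : ℕ) → (Fin m → Fin n) → ((Fin n → ℝ) → ℝ) → ((Fin n → ℝ) → ℝ)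
  | 0, _, f => f
  | m + 1, i, f => pd (i 0) (pdIter m (fun j => i j.succ) f)

/-- A (smooth, totally symmetric) Killing `ℓ`-tensor: `∂^{(a₀} k^{a₁…a_ℓ)} = 0`. -/
def IsKillingTensor {n : ℕ} (ginv : Matrix (Fin n) (Fin n) ℝ) (ℓ : ℕ)
    (k : (Fin ℓ → Fin n) → (Fin n → ℝ) → ℝ) : Prop :=
  (∀ i, ContDiff ℝ (⊤ : ℕ∞) (k i)) ∧
  (∀ (σ : Equiv.Perm (Fin ℓ)) (i : Fin ℓ → Fin n), k (i ∘ σ) = k i) ∧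
  (∀ (i : Fin (ℓ + 1) → Fin n) (x : Fin n → ℝ),
    ∑ σ : Equiv.Perm (Fin (ℓ + 1)),
      pdUp ginv (i (σ 0)) (k (fun j => i (σ j.succ))) x = 0)

end


section Lib
variable {n : ℕ} {f f₁ f₂ : (Fin n → ℝ) → ℝ}

lemma coe_top_le1 : (1 : WithTop ℕ∞) ≤ ((⊤ : ℕ∞) : WithTop ℕ∞) := by
  exact_mod_cast ENat.natCast_le_of_coe_top_le_withTop le_rfl 1

lemma coe_top_le2 : (2 : WithTop ℕ∞) ≤ ((⊤ : ℕ∞) : WithTop ℕ∞) := by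
  exact_mod_cast ENat.natCast_le_of_coe_top_le_withTop le_rfl 2

lemma sm_diff (hf : ContDiff ℝ (⊤ : ℕ∞) f) : Differentiable ℝ f :=
  hf.differentiable (by simp)

lemma pd_smooth (a : Fin n) (hf : ContDiff ℝ (⊤ : ℕ∞) f) : ContDiff ℝ (⊤ : ℕ∞) (pd a f) := by
  have h1 : ContDiff ℝ (⊤ : ℕ∞) (fderiv ℝ f) := hf.fderiv_right (by simp)
  exact h1.clm_apply contDiff_const

lemma pd_zero (a : Fin n) : pd a (fun _ => (0:ℝ)) = fun _ => 0 := by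
  funext x
  simp [pd, fderiv_const]

lemma pd_add (a : Fin n) (h1 : ContDiff ℝ (⊤ : ℕ∞) f₁) (h2 : ContDiff ℝ (⊤ : ℕ∞) f₂) :
    pd a (fun x => f₁ x + f₂ x) = fun x => pd a f₁ x + pd a f₂ x := by
  funext x
  simp [pd, fderiv_fun_add (sm_diff h1 x) (sm_diff h2 x)]

lemma pd_neg (a : Fin n) :
    pd a (fun x => -f x) = fun x => -(pd a f x) := by
  funext x
  simp [pd, fderiv_neg]

lemma pd_const_mul (a : Fin n) (c : ℝ) (hf : ContDiff ℝ (⊤ : ℕ∞) f) :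
    pd a (fun x => c * f x) = fun x => c * pd a f x := by
  funext x
  simp [pd, fderiv_const_mul (sm_diff hf x)]

lemma pd_sum {ι : Type*} (s : Finset ι) (F : ι → (Fin n → ℝ) → ℝ)
    (hF : ∀ i, ContDiff ℝ (⊤ : ℕ∞) (F i)) (a : Fin n) :
    pd a (fun x => ∑ i ∈ s, F i x) = fun x => ∑ i ∈ s, pd a (F i) x := by
  funext x
  have : fderiv ℝ (fun x => ∑ i ∈ s, F i x) x = ∑ i ∈ s, fderiv ℝ (F i) x :=
    fderiv_fun_sum (fun i _ => (sm_diff (hF i) x))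
  simp [pd, this]

lemma pd_comm (a b : Fin n) (hf : ContDiff ℝ (⊤ : ℕ∞) f) :
    pd a (pd b f) = pd b (pd a f) := by
  funext x
  have hdf : Differentiable ℝ (fderiv ℝ f) :=
    (hf.fderiv_right (le_refl _) : ContDiff ℝ (⊤ : ℕ∞) (fderiv ℝ f)).differentiable (by simp)
  have key : ∀ u w : Fin n → ℝ,
      fderiv ℝ (fun y => fderiv ℝ f y w) x u = fderiv ℝ (fderiv ℝ f) x u w := by
    intro u w
    have h := fderiv_clm_apply (c := fderiv ℝ f) (u := fun _ => w) (hdf x)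
      (differentiableAt_const w)
    rw [show (fun y => fderiv ℝ f y w) = fun y => (fderiv ℝ f y) ((fun _ => w) y) from rfl, h]
    simp
  have hsymm : IsSymmSndFDerivAt ℝ f x :=
    ContDiffAt.isSymmSndFDerivAt hf.contDiffAt (by rw [minSmoothness_of_isRCLikeNormedField]; exact coe_top_le2)
  show fderiv ℝ (fun y => fderiv ℝ f y (Pi.single b 1)) x (Pi.single a 1)
     = fderiv ℝ (fun y => fderiv ℝ f y (Pi.single a 1)) x (Pi.single b 1)
  rw [key, key, hsymm (Pi.single a 1) (Pi.single b 1)]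

end Lib
section Lib2
variable {n : ℕ} {f f₁ f₂ f₃ f₄ : (Fin n → ℝ) → ℝ} (ginv : Matrix (Fin n) (Fin n) ℝ)

lemma pdUp_smooth (a : Fin n) (hf : ContDiff ℝ (⊤ : ℕ∞) f) :
    ContDiff ℝ (⊤ : ℕ∞) (pdUp ginv a f) :=
  ContDiff.sum fun b _ => contDiff_const.mul (pd_smooth b hf)

lemma pdUp_sum {ι : Type*} (a : Fin n) (s : Finset ι) (F : ι → (Fin n → ℝ) → ℝ)
    (hF : ∀ i, ContDiff ℝ (⊤ : ℕ∞) (F i)) :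
    pdUp ginv a (fun x => ∑ i ∈ s, F i x) = fun x => ∑ i ∈ s, pdUp ginv a (F i) x := by
  funext x
  simp only [pdUp, pd_sum s F hF]
  rw [Finset.sum_comm]
  exact Finset.sum_congr rfl fun i _ => by rw [Finset.mul_sum]

lemma pdUp_const_mul (a : Fin n) (c : ℝ) (hf : ContDiff ℝ (⊤ : ℕ∞) f) :
    pdUp ginv a (fun x => c * f x) = fun x => c * pdUp ginv a f x := by
  funext x
  simp only [pdUp, pd_const_mul _ c hf, Finset.mul_sum]
  exact Finset.sum_congr rfl fun b _ => by ring

lemma pdUp_add (a : Fin n) (h1 : ContDiff ℝ (⊤ : ℕ∞) f₁) (h2 : ContDiff ℝ (⊤ : ℕ∞) f₂) :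
    pdUp ginv a (fun x => f₁ x + f₂ x) = fun x => pdUp ginv a f₁ x + pdUp ginv a f₂ x := by
  funext x
  simp only [pdUp, pd_add _ h1 h2, mul_add, Finset.sum_add_distrib]

lemma pdUp_neg (a : Fin n) :
    pdUp ginv a (fun x => -f x) = fun x => -(pdUp ginv a f x) := by
  funext x
  simp only [pdUp, pd_neg, mul_neg, Finset.sum_neg_distrib]

lemma pd_pdUp_comm (a b : Fin n) (hf : ContDiff ℝ (⊤ : ℕ∞) f) :
    pd b (pdUp ginv a f) = pdUp ginv a (pd b f) := by
  show pd b (fun x => ∑ e, ginv a e * pd e f x) = _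
  rw [pd_sum Finset.univ (fun e => fun x => ginv a e * pd e f x)
    (fun e => contDiff_const.mul (pd_smooth e hf)) b]
  funext x
  refine Finset.sum_congr rfl fun e _ => ?_
  rw [pd_const_mul b (ginv a e) (pd_smooth e hf), pd_comm b e hf]

lemma pd_pdUp_expand (a b : Fin n) (hf : ContDiff ℝ (⊤ : ℕ∞) f) :
    pd b (pdUp ginv a f) = fun x => ∑ e, ginv a e * pd b (pd e f) x := by
  show pd b (fun x => ∑ e, ginv a e * pd e f x) = _
  rw [pd_sum Finset.univ (fun e => fun x => ginv a e * pd e f x)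
    (fun e => contDiff_const.mul (pd_smooth e hf)) b]
  funext x
  exact Finset.sum_congr rfl fun e _ => by
    rw [pd_const_mul b (ginv a e) (pd_smooth e hf)]

lemma pdUp_pd_pd (a r s : Fin n) (hf : ContDiff ℝ (⊤ : ℕ∞) f) :
    pdUp ginv a (pd r (pd s f)) = pd r (pd s (pdUp ginv a f)) := by
  rw [pd_pdUp_comm ginv a s hf, ← pd_pdUp_comm ginv a r (pd_smooth s hf)]

lemma pd_neg_add3 (c : Fin n) (h1 : ContDiff ℝ (⊤ : ℕ∞) f₁) (h2 : ContDiff ℝ (⊤ : ℕ∞) f₂)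
    (h3 : ContDiff ℝ (⊤ : ℕ∞) f₃) :
    pd c (fun x => -(f₁ x + f₂ x + f₃ x)) =
      fun x => -(pd c f₁ x + pd c f₂ x + pd c f₃ x) := by
  have e1 : pd c (fun x => f₁ x + f₂ x + f₃ x) = fun x => pd c f₁ x + pd c f₂ x + pd c f₃ x := by
    rw [pd_add c (h1.add h2) h3, pd_add c h1 h2]
  calc pd c (fun x => -(f₁ x + f₂ x + f₃ x))
      = fun x => -(pd c (fun x => f₁ x + f₂ x + f₃ x) x) := pd_neg c
    _ = fun x => -(pd c f₁ x + pd c f₂ x + pd c f₃ x) := by rw [e1]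

lemma pd_add4 (c : Fin n) (h1 : ContDiff ℝ (⊤ : ℕ∞) f₁) (h2 : ContDiff ℝ (⊤ : ℕ∞) f₂)
    (h3 : ContDiff ℝ (⊤ : ℕ∞) f₃) (h4 : ContDiff ℝ (⊤ : ℕ∞) f₄) :
    pd c (fun x => f₁ x + f₂ x + f₃ x + f₄ x) =
      fun x => pd c f₁ x + pd c f₂ x + pd c f₃ x + pd c f₄ x := by
  rw [pd_add c ((h1.add h2).add h3) h4, pd_add c (h1.add h2) h3, pd_add c h1 h2]

lemma lap_zero : lap ginv (fun _ => (0:ℝ)) = fun _ => 0 := by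
  funext x
  simp only [lap]
  have : ∀ a b : Fin n, pd a (pd b (fun _ => (0:ℝ))) = fun _ => 0 := by
    intro a b; rw [pd_zero, pd_zero]
  simp [this]

lemma lap_add (h1 : ContDiff ℝ (⊤ : ℕ∞) f₁) (h2 : ContDiff ℝ (⊤ : ℕ∞) f₂) :
    lap ginv (fun x => f₁ x + f₂ x) = fun x => lap ginv f₁ x + lap ginv f₂ x := by
  funext x
  simp only [lap]
  have : ∀ a b : Fin n, pd a (pd b (fun x => f₁ x + f₂ x))
      = fun x => pd a (pd b f₁) x + pd a (pd b f₂) x := by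
    intro a b
    rw [pd_add b h1 h2, pd_add a (pd_smooth b h1) (pd_smooth b h2)]
  simp only [this, mul_add, Finset.sum_add_distrib]

lemma lap_smooth (hf : ContDiff ℝ (⊤ : ℕ∞) f) : ContDiff ℝ (⊤ : ℕ∞) (lap ginv f) :=
  ContDiff.sum fun a _ => ContDiff.sum fun b _ =>
    (contDiff_const.mul (pd_smooth a (pd_smooth b hf)))

lemma lap_pdUp_comm (a : Fin n) (hf : ContDiff ℝ (⊤ : ℕ∞) f) :
    lap ginv (pdUp ginv a f) = pdUp ginv a (lap ginv f) := by
  have e1 : pdUp ginv a (lap ginv f)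
      = fun x => ∑ r, ∑ e, ginv r e * pdUp ginv a (pd r (pd e f)) x := by
    show pdUp ginv a (fun x => ∑ r, (fun x => ∑ e, ginv r e * pd r (pd e f) x) x) = _
    rw [pdUp_sum ginv a Finset.univ (fun r => fun x => ∑ e, ginv r e * pd r (pd e f) x) (fun r => ContDiff.sum fun e _ =>
      contDiff_const.mul (pd_smooth r (pd_smooth e hf)))]
    funext x
    refine Finset.sum_congr rfl fun r _ => ?_
    rw [pdUp_sum ginv a Finset.univ (fun e => fun x => ginv r e * pd r (pd e f) x)
      (fun e => contDiff_const.mul (pd_smooth r (pd_smooth e hf)))]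
    refine Finset.sum_congr rfl fun e _ => ?_
    rw [pdUp_const_mul ginv a (ginv r e) (pd_smooth r (pd_smooth e hf))]
  rw [e1]
  funext x
  simp only [lap]
  refine Finset.sum_congr rfl fun r _ => Finset.sum_congr rfl fun e _ => ?_
  rw [pdUp_pd_pd ginv a r e hf]

lemma gg_contract (g : Matrix (Fin n) (Fin n) ℝ) (hgsym : g.IsSymm) (hginv : g * ginv = 1)
    (F : Fin n → Fin n → ℝ) :
    ∑ c, ∑ d, g c d * ∑ e, ginv c e * F d e = ∑ d, F d d := by
  have hdelta : ∀ d e : Fin n, ∑ c, g c d * ginv c e = if d = e then 1 else 0 := by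
    intro d e
    have h1 : (g * ginv) d e = (1 : Matrix (Fin n) (Fin n) ℝ) d e := by rw [hginv]
    rw [Matrix.mul_apply, Matrix.one_apply] at h1
    rw [← h1]
    exact Finset.sum_congr rfl fun c _ => by rw [hgsym.apply]
  calc ∑ c, ∑ d, g c d * ∑ e, ginv c e * F d e
      = ∑ c, ∑ d, ∑ e, (g c d * ginv c e) * F d e := by
        refine Finset.sum_congr rfl fun c _ => Finset.sum_congr rfl fun d _ => ?_
        rw [Finset.mul_sum]
        exact Finset.sum_congr rfl fun e _ => by ring
    _ = ∑ d, ∑ e, ∑ c, (g c d * ginv c e) * F d e := by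
        rw [Finset.sum_comm]
        exact Finset.sum_congr rfl fun d _ => Finset.sum_comm
    _ = ∑ d, ∑ e, (if d = e then (1:ℝ) else 0) * F d e := by
        refine Finset.sum_congr rfl fun d _ => Finset.sum_congr rfl fun e _ => ?_
        rw [← Finset.sum_mul, hdelta]
    _ = ∑ d, F d d := by
        refine Finset.sum_congr rfl fun d _ => ?_
        simp [ite_mul]
  
lemma gg_contract' (g : Matrix (Fin n) (Fin n) ℝ) (hginv : g * ginv = 1)
    (F : Fin n → Fin n → ℝ) :
    ∑ c, ∑ d, g c d * ∑ e, ginv d e * F c e = ∑ c, F c c := by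
  have hdelta : ∀ c e : Fin n, ∑ d, g c d * ginv d e = if c = e then 1 else 0 := by
    intro c e
    have h1 : (g * ginv) c e = (1 : Matrix (Fin n) (Fin n) ℝ) c e := by rw [hginv]
    rw [Matrix.mul_apply, Matrix.one_apply] at h1
    rw [h1]
  calc ∑ c, ∑ d, g c d * ∑ e, ginv d e * F c e
      = ∑ c, ∑ d, ∑ e, (g c d * ginv d e) * F c e := by
        refine Finset.sum_congr rfl fun c _ => Finset.sum_congr rfl fun d _ => ?_
        rw [Finset.mul_sum]
        exact Finset.sum_congr rfl fun e _ => by ring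
    _ = ∑ c, ∑ e, ∑ d, (g c d * ginv d e) * F c e := by
        exact Finset.sum_congr rfl fun c _ => Finset.sum_comm
    _ = ∑ c, ∑ e, (if c = e then (1:ℝ) else 0) * F c e := by
        refine Finset.sum_congr rfl fun c _ => Finset.sum_congr rfl fun e _ => ?_
        rw [← Finset.sum_mul, hdelta]
    _ = ∑ c, F c c := by
        refine Finset.sum_congr rfl fun c _ => ?_
        simp [ite_mul]

end Lib2
section Lib3
variable {n : ℕ} {f₁ f₂ f₃ f₄ : (Fin n → ℝ) → ℝ} (ginv : Matrix (Fin n) (Fin n) ℝ)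

lemma lap_add4 (h1 : ContDiff ℝ (⊤ : ℕ∞) f₁) (h2 : ContDiff ℝ (⊤ : ℕ∞) f₂)
    (h3 : ContDiff ℝ (⊤ : ℕ∞) f₃) (h4 : ContDiff ℝ (⊤ : ℕ∞) f₄) :
    lap ginv (fun x => f₁ x + f₂ x + f₃ x + f₄ x) =
      fun x => lap ginv f₁ x + lap ginv f₂ x + lap ginv f₃ x + lap ginv f₄ x := by
  rw [lap_add ginv ((h1.add h2).add h3) h4, lap_add ginv (h1.add h2) h3, lap_add ginv h1 h2]

end Lib3

noncomputable section Aux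
variable {n : ℕ}

def Kt (g : Matrix (Fin n) (Fin n) ℝ) (k : Fin n → Fin n → Fin n → (Fin n → ℝ) → ℝ)
    (c : Fin n) : (Fin n → ℝ) → ℝ :=
  fun x => ∑ p, ∑ q, g p q * k p q c x

def Dt (k : Fin n → Fin n → Fin n → (Fin n → ℝ) → ℝ) (a b : Fin n) : (Fin n → ℝ) → ℝ :=
  fun x => ∑ c, pd c (k c a b) x

end Aux

/-- for a Killing 3-tensor `k` on `ℝⁿ`, the double divergence
`v^a = ∂_r ∂_s k^{rsa}` is a Killing vector field: `∂^a v^b + ∂^b v^a = 0`. -/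
theorem stmt15 {n : ℕ} (hn : 0 < n)
    (g ginv : Matrix (Fin n) (Fin n) ℝ) (hgsym : g.IsSymm) (hginv : g * ginv = 1)
    (k : Fin n → Fin n → Fin n → (Fin n → ℝ) → ℝ)
    (hsmooth : ∀ a b c, ContDiff ℝ (⊤ : ℕ∞) (k a b c))
    (hsymk : ∀ (a b c : Fin n) (σ : Equiv.Perm (Fin 3)),
      k (![a, b, c] (σ 0)) (![a, b, c] (σ 1)) (![a, b, c] (σ 2)) = k a b c)
    (hkill : ∀ (a b c d : Fin n) (x : Fin n → ℝ),
      pdUp ginv a (k b c d) x + pdUp ginv b (k a c d) x +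
        pdUp ginv c (k a b d) x + pdUp ginv d (k a b c) x = 0)
    (v : Fin n → (Fin n → ℝ) → ℝ)
    (hv : ∀ (a : Fin n) (x : Fin n → ℝ), v a x = ∑ r, ∑ s, pd r (pd s (k r s a)) x) :
    ∀ (a b : Fin n) (x : Fin n → ℝ), pdUp ginv a (v b) x + pdUp ginv b (v a) x = 0 := by
  -- symmetry of k
  have hs12 : ∀ a b c, k b a c = k a b c := by
    intro a b c
    have h := hsymk a b c (Equiv.swap 0 1)
    simpa [show (Equiv.swap (0:Fin 3) 1) 0 = 1 from by decide,
           show (Equiv.swap (0:Fin 3) 1) 1 = 0 from by decide,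
           show (Equiv.swap (0:Fin 3) 1) 2 = 2 from by decide] using h
  have hs23 : ∀ a b c, k a c b = k a b c := by
    intro a b c
    have h := hsymk a b c (Equiv.swap 1 2)
    simpa [show (Equiv.swap (1:Fin 3) 2) 0 = 0 from by decide,
           show (Equiv.swap (1:Fin 3) 2) 1 = 2 from by decide,
           show (Equiv.swap (1:Fin 3) 2) 2 = 1 from by decide] using h
  have hcyc : ∀ a b c, k c a b = k a b c := by
    intro a b c
    rw [hs12 a c b]; exact hs23 a b c
  -- smoothness
  have smk := hsmooth
  have smK : ∀ c, ContDiff ℝ (⊤ : ℕ∞) (Kt g k c) := fun c =>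
    ContDiff.sum fun p _ => ContDiff.sum fun q _ => contDiff_const.mul (smk p q c)
  have smD : ∀ a b, ContDiff ℝ (⊤ : ℕ∞) (Dt k a b) := fun a b =>
    ContDiff.sum fun c _ => pd_smooth c (smk c a b)
  have hv' : ∀ c, v c = fun x => ∑ r, ∑ s, pd r (pd s (k r s c)) x := fun c => funext (hv c)
  have smv : ∀ c, ContDiff ℝ (⊤ : ℕ∞) (v c) := by
    intro c
    rw [hv' c]
    exact ContDiff.sum fun r _ => ContDiff.sum fun s _ =>
      pd_smooth r (pd_smooth s (smk r s c))
  have smUK : ∀ a b, ContDiff ℝ (⊤ : ℕ∞) (pdUp ginv a (Kt g k b)) := fun a b =>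
    pdUp_smooth ginv a (smK b)
  -- Killing equation, solved form
  have hkA : ∀ a b c d, pdUp ginv a (k b c d) =
      fun x => -(pdUp ginv b (k a c d) x + pdUp ginv c (k a b d) x + pdUp ginv d (k a b c) x) := by
    intro a b c d
    funext x
    have := hkill a b c d x
    linarith
  -- Step 1 : pdUp passes inside the double divergence
  have hUav : ∀ a b, pdUp ginv a (v b) =
      fun x => ∑ r, ∑ s, pd r (pd s (pdUp ginv a (k r s b))) x := by
    intro a b
    rw [hv' b]
    simp only [pdUp_sum ginv a Finset.univ (fun r => fun x => ∑ s, pd r (pd s (k r s b)) x)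
      (fun r => ContDiff.sum fun s _ => pd_smooth r (pd_smooth s (smk r s b)))]
    funext x
    refine Finset.sum_congr rfl fun r _ => ?_
    simp only [pdUp_sum ginv a Finset.univ (fun s => pd r (pd s (k r s b)))
      (fun s => pd_smooth r (pd_smooth s (smk r s b)))]
    refine Finset.sum_congr rfl fun s _ => ?_
    rw [pdUp_pd_pd ginv a r s (smk r s b)]
  -- Step 2 : main Killing identity after two divergences
  have hG : ∀ a b x, pdUp ginv a (v b) x + pdUp ginv b (v a) x
      = -(2 * (∑ r, ∑ s, pd r (pd s (pdUp ginv r (k a s b))) x)) := by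
    intro a b x
    have e1 : pdUp ginv a (v b) x = ∑ r, ∑ s, pd r (pd s (pdUp ginv a (k r s b))) x :=
      congrFun (hUav a b) x
    have h1 : ∀ r s, pd r (pd s (pdUp ginv a (k r s b))) x =
        -(pd r (pd s (pdUp ginv r (k a s b))) x + pd r (pd s (pdUp ginv s (k a r b))) x
          + pd r (pd s (pdUp ginv b (k a r s))) x) := by
      intro r s
      have sm1 := pdUp_smooth ginv r (smk a s b)
      have sm2 := pdUp_smooth ginv s (smk a r b)
      have sm3 := pdUp_smooth ginv b (smk a r s)
      simp only [hkA a r s b, pd_neg_add3 s sm1 sm2 sm3,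
        pd_neg_add3 r (pd_smooth s sm1) (pd_smooth s sm2) (pd_smooth s sm3)]
    have e2 : pdUp ginv a (v b) x =
        -((∑ r, ∑ s, pd r (pd s (pdUp ginv r (k a s b))) x)
          + (∑ r, ∑ s, pd r (pd s (pdUp ginv s (k a r b))) x)
          + (∑ r, ∑ s, pd r (pd s (pdUp ginv b (k a r s))) x)) := by
      rw [e1]
      rw [Finset.sum_congr rfl fun r _ => Finset.sum_congr rfl fun s _ => h1 r s]
      simp only [neg_add_rev, Finset.sum_add_distrib, Finset.sum_neg_distrib]
      try ring
    have hT2 : (∑ r, ∑ s, pd r (pd s (pdUp ginv s (k a r b))) x)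
        = ∑ r, ∑ s, pd r (pd s (pdUp ginv r (k a s b))) x := by
      rw [Finset.sum_comm]
      refine Finset.sum_congr rfl fun p _ => Finset.sum_congr rfl fun q _ => ?_
      rw [pd_comm q p (pdUp_smooth ginv p (smk a q b))]
    have hT3 : (∑ r, ∑ s, pd r (pd s (pdUp ginv b (k a r s))) x) = pdUp ginv b (v a) x := by
      have e3 : (∑ r, ∑ s, pd r (pd s (pdUp ginv b (k a r s))) x)
          = ∑ r, ∑ s, pd r (pd s (pdUp ginv b (k r s a))) x := by
        refine Finset.sum_congr rfl fun r _ => Finset.sum_congr rfl fun s _ => ?_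
        rw [hcyc r s a]
      rw [e3]
      exact (congrFun (hUav b a) x).symm
    rw [hT2, hT3] at e2
    linarith
  -- Step 3 : the double sum is lap of the divergence
  have hWlap : ∀ a b x, (∑ r, ∑ s, pd r (pd s (pdUp ginv r (k a s b))) x)
      = lap ginv (Dt k a b) x := by
    intro a b x
    have hexp : ∀ r s : Fin n, pd r (pd s (pdUp ginv r (k a s b))) x
        = ∑ e, ginv r e * pd r (pd e (pd s (k s a b))) x := by
      intro r s
      rw [show k a s b = k s a b from hs12 s a b]
      simp only [pd_pdUp_expand ginv r s (smk s a b)]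
      simp only [pd_sum Finset.univ (fun e => fun x => ginv r e * pd s (pd e (k s a b)) x)
        (fun e => contDiff_const.mul (pd_smooth s (pd_smooth e (smk s a b)))) r]
      refine Finset.sum_congr rfl fun e _ => ?_
      simp only [pd_const_mul r (ginv r e) (pd_smooth s (pd_smooth e (smk s a b)))]
      rw [pd_comm s e (smk s a b)]
    have hRHS : lap ginv (Dt k a b) x
        = ∑ r, ∑ e, ginv r e * ∑ s, pd r (pd e (pd s (k s a b))) x := by
      simp only [lap]
      refine Finset.sum_congr rfl fun r _ => Finset.sum_congr rfl fun e _ => ?_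
      congr 1
      rw [show Dt k a b = fun x => ∑ c, pd c (k c a b) x from rfl]
      simp only [pd_sum Finset.univ (fun c => pd c (k c a b))
        (fun c => pd_smooth c (smk c a b)) e]
      simp only [pd_sum Finset.univ (fun c => pd e (pd c (k c a b)))
        (fun c => pd_smooth e (pd_smooth c (smk c a b))) r]
    calc (∑ r, ∑ s, pd r (pd s (pdUp ginv r (k a s b))) x)
        = ∑ r, ∑ s, ∑ e, ginv r e * pd r (pd e (pd s (k s a b))) x :=
          Finset.sum_congr rfl fun r _ => Finset.sum_congr rfl fun s _ => hexp r s
      _ = ∑ r, ∑ e, ∑ s, ginv r e * pd r (pd e (pd s (k s a b))) x :=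
          Finset.sum_congr rfl fun r _ => Finset.sum_comm
      _ = ∑ r, ∑ e, ginv r e * ∑ s, pd r (pd e (pd s (k s a b))) x :=
          Finset.sum_congr rfl fun r _ => Finset.sum_congr rfl fun e _ =>
            (Finset.mul_sum _ _ _).symm
      _ = lap ginv (Dt k a b) x := hRHS.symm
  -- Step 4 : traced Killing identity
  have hA3 : ∀ (a b' : Fin n) x, pdUp ginv a (Kt g k b') x
      = ∑ c, ∑ d, g c d * pdUp ginv a (k c d b') x := by
    intro a b' x
    have hfun : pdUp ginv a (Kt g k b')
        = fun x => ∑ c, ∑ d, g c d * pdUp ginv a (k c d b') x := by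
      rw [show Kt g k b' = fun x => ∑ p, ∑ q, g p q * k p q b' x from rfl]
      simp only [pdUp_sum ginv a Finset.univ (fun p => fun x => ∑ q, g p q * k p q b' x)
        (fun p => ContDiff.sum fun q _ => contDiff_const.mul (smk p q b'))]
      funext y
      refine Finset.sum_congr rfl fun p _ => ?_
      simp only [pdUp_sum ginv a Finset.univ (fun q => fun x => g p q * k p q b' x)
        (fun q => contDiff_const.mul (smk p q b'))]
      refine Finset.sum_congr rfl fun q _ => ?_
      simp only [pdUp_const_mul ginv a (g p q) (smk p q b')]
    exact congrFun hfun x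
  have hS5 : ∀ a b x, Dt k a b x + Dt k a b x
      + pdUp ginv a (Kt g k b) x + pdUp ginv b (Kt g k a) x = 0 := by
    intro a b x
    have h0 : ∑ c, ∑ d, g c d * (pdUp ginv c (k d a b) x + pdUp ginv d (k c a b) x
        + pdUp ginv a (k c d b) x + pdUp ginv b (k c d a) x) = 0 := by
      refine Finset.sum_eq_zero fun c _ => Finset.sum_eq_zero fun d _ => ?_
      rw [hkill c d a b x, mul_zero]
    simp only [mul_add, Finset.sum_add_distrib] at h0
    have hA1 : ∑ c, ∑ d, g c d * pdUp ginv c (k d a b) x = Dt k a b x := by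
      simp only [pdUp]
      exact gg_contract ginv g hgsym hginv (fun d e => pd e (k d a b) x)
    have hA2 : ∑ c, ∑ d, g c d * pdUp ginv d (k c a b) x = Dt k a b x := by
      simp only [pdUp]
      exact gg_contract' ginv g hginv (fun c e => pd e (k c a b) x)
    have h3 := hA3 a b x
    have h4 := hA3 b a x
    have h3' : ∑ c, ∑ d, g c d * pdUp ginv a (k c d b) x = pdUp ginv a (Kt g k b) x := h3.symm
    have h4' : ∑ c, ∑ d, g c d * pdUp ginv b (k c d a) x = pdUp ginv b (Kt g k a) x := h4.symm
    linarith
  -- Step 5 : divergence of the trace vanishes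
  have hdiv : (fun x => ∑ c, pd c (Kt g k c) x) = fun _ => (0:ℝ) := by
    funext x
    have h0 : ∑ p, ∑ q, g p q * (Dt k p q x + Dt k p q x
        + pdUp ginv p (Kt g k q) x + pdUp ginv q (Kt g k p) x) = 0 := by
      refine Finset.sum_eq_zero fun p _ => Finset.sum_eq_zero fun q _ => ?_
      rw [hS5 p q x, mul_zero]
    simp only [mul_add, Finset.sum_add_distrib] at h0
    have eKc : ∀ c, pd c (Kt g k c) x = ∑ p, ∑ q, g p q * pd c (k p q c) x := by
      intro c
      have hfun : pd c (Kt g k c) = fun x => ∑ p, ∑ q, g p q * pd c (k p q c) x := by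
        rw [show Kt g k c = fun x => ∑ p, ∑ q, g p q * k p q c x from rfl]
        simp only [pd_sum Finset.univ (fun p => fun x => ∑ q, g p q * k p q c x)
          (fun p => ContDiff.sum fun q _ => contDiff_const.mul (smk p q c)) c]
        funext y
        refine Finset.sum_congr rfl fun p _ => ?_
        simp only [pd_sum Finset.univ (fun q => fun x => g p q * k p q c x)
          (fun q => contDiff_const.mul (smk p q c)) c]
        refine Finset.sum_congr rfl fun q _ => ?_
        simp only [pd_const_mul c (g p q) (smk p q c)]
      exact congrFun hfun x
    have hB1 : ∑ p, ∑ q, g p q * Dt k p q x = ∑ c, pd c (Kt g k c) x := by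
      calc ∑ p, ∑ q, g p q * Dt k p q x
          = ∑ p, ∑ q, ∑ c, g p q * pd c (k p q c) x := by
            refine Finset.sum_congr rfl fun p _ => Finset.sum_congr rfl fun q _ => ?_
            rw [show Dt k p q x = ∑ c, pd c (k c p q) x from rfl, Finset.mul_sum]
            refine Finset.sum_congr rfl fun c _ => ?_
            rw [hcyc p q c]
        _ = ∑ p, ∑ c, ∑ q, g p q * pd c (k p q c) x :=
            Finset.sum_congr rfl fun p _ => Finset.sum_comm
        _ = ∑ c, ∑ p, ∑ q, g p q * pd c (k p q c) x := Finset.sum_comm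
        _ = ∑ c, pd c (Kt g k c) x :=
            Finset.sum_congr rfl fun c _ => (eKc c).symm
    have hB2 : ∑ p, ∑ q, g p q * pdUp ginv p (Kt g k q) x = ∑ q, pd q (Kt g k q) x := by
      simp only [pdUp]
      exact gg_contract ginv g hgsym hginv (fun q e => pd e (Kt g k q) x)
    have hB3 : ∑ p, ∑ q, g p q * pdUp ginv q (Kt g k p) x = ∑ p, pd p (Kt g k p) x := by
      simp only [pdUp]
      exact gg_contract' ginv g hginv (fun p e => pd e (Kt g k p) x)
    linarith
  -- Step 6 : lap of the trace vector is -2 v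
  have hLK : ∀ c x, lap ginv (Kt g k c) x = -(v c x + v c x) := by
    intro a x
    have h1 : ∀ b : Fin n, pd b (Dt k a b) x + pd b (Dt k a b) x
        + pd b (pdUp ginv a (Kt g k b)) x + pd b (pdUp ginv b (Kt g k a)) x = 0 := by
      intro b
      have hfun : (fun x => Dt k a b x + Dt k a b x + pdUp ginv a (Kt g k b) x
          + pdUp ginv b (Kt g k a) x) = fun _ => (0:ℝ) := funext fun x => hS5 a b x
      have h2 : pd b (fun x => Dt k a b x + Dt k a b x + pdUp ginv a (Kt g k b) x
          + pdUp ginv b (Kt g k a) x) x = 0 := by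
        rw [hfun, pd_zero]
      rw [pd_add4 b (smD a b) (smD a b) (smUK a b) (smUK b a)] at h2
      exact h2
    have h3 : ∑ b, (pd b (Dt k a b) x + pd b (Dt k a b) x
        + pd b (pdUp ginv a (Kt g k b)) x + pd b (pdUp ginv b (Kt g k a)) x) = 0 :=
      Finset.sum_eq_zero fun b _ => h1 b
    simp only [Finset.sum_add_distrib] at h3
    have hC1 : ∑ b, pd b (Dt k a b) x = v a x := by
      have e1 : ∀ b : Fin n, pd b (Dt k a b) x = ∑ c, pd b (pd c (k b c a)) x := by
        intro b
        have hfun : pd b (Dt k a b) = fun x => ∑ c, pd b (pd c (k c a b)) x := by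
          rw [show Dt k a b = fun x => ∑ c, pd c (k c a b) x from rfl]
          simp only [pd_sum Finset.univ (fun c => pd c (k c a b))
            (fun c => pd_smooth c (smk c a b)) b]
        have e2 := congrFun hfun x
        rw [e2]
        refine Finset.sum_congr rfl fun c _ => ?_
        rw [show k c a b = k b c a from (hcyc a b c).trans (hcyc b c a)]
      calc ∑ b, pd b (Dt k a b) x = ∑ b, ∑ c, pd b (pd c (k b c a)) x :=
            Finset.sum_congr rfl fun b _ => e1 b
        _ = v a x := (hv a x).symm
    have hC2 : ∑ b, pd b (pdUp ginv a (Kt g k b)) x = 0 := by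
      have e1 : ∀ b : Fin n, pd b (pdUp ginv a (Kt g k b)) x
          = ∑ e, ginv a e * pd e (pd b (Kt g k b)) x := by
        intro b
        have hfun := pd_pdUp_expand ginv a b (smK b)
        have e2 := congrFun hfun x
        rw [e2]
        refine Finset.sum_congr rfl fun e _ => ?_
        rw [pd_comm b e (smK b)]
      calc ∑ b, pd b (pdUp ginv a (Kt g k b)) x
          = ∑ b, ∑ e, ginv a e * pd e (pd b (Kt g k b)) x :=
            Finset.sum_congr rfl fun b _ => e1 b
        _ = ∑ e, ∑ b, ginv a e * pd e (pd b (Kt g k b)) x := Finset.sum_comm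
        _ = ∑ e, ginv a e * ∑ b, pd e (pd b (Kt g k b)) x :=
            Finset.sum_congr rfl fun e _ => (Finset.mul_sum _ _ _).symm
        _ = 0 := by
            refine Finset.sum_eq_zero fun e _ => ?_
            have e3 : (∑ b, pd e (pd b (Kt g k b)) x)
                = pd e (fun x => ∑ b, pd b (Kt g k b) x) x := by
              have := pd_sum Finset.univ (fun b => pd b (Kt g k b))
                (fun b => pd_smooth b (smK b)) e
              exact (congrFun this x).symm
            rw [e3, hdiv, pd_zero, mul_zero]
    have hC3 : ∑ b, pd b (pdUp ginv b (Kt g k a)) x = lap ginv (Kt g k a) x := by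
      have e1 : ∀ b : Fin n, pd b (pdUp ginv b (Kt g k a)) x
          = ∑ e, ginv b e * pd b (pd e (Kt g k a)) x := by
        intro b
        exact congrFun (pd_pdUp_expand ginv b b (smK a)) x
      calc ∑ b, pd b (pdUp ginv b (Kt g k a)) x
          = ∑ b, ∑ e, ginv b e * pd b (pd e (Kt g k a)) x :=
            Finset.sum_congr rfl fun b _ => e1 b
        _ = lap ginv (Kt g k a) x := rfl
    linarith
  -- Step 7 : conclude
  intro a b x
  have hG1 := hG a b x
  have hW1 := hWlap a b x
  have hfun : (fun x => Dt k a b x + Dt k a b x + pdUp ginv a (Kt g k b) x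
      + pdUp ginv b (Kt g k a) x) = fun _ => (0:ℝ) := funext fun x => hS5 a b x
  have h5 : lap ginv (fun x => Dt k a b x + Dt k a b x + pdUp ginv a (Kt g k b) x
      + pdUp ginv b (Kt g k a) x) = fun _ => 0 := by
    rw [hfun]; exact lap_zero ginv
  rw [lap_add4 ginv (smD a b) (smD a b) (smUK a b) (smUK b a)] at h5
  have h4 : lap ginv (Dt k a b) x + lap ginv (Dt k a b) x
      + lap ginv (pdUp ginv a (Kt g k b)) x + lap ginv (pdUp ginv b (Kt g k a)) x = 0 :=
    congrFun h5 x
  have h7 : ∀ (p q : Fin n), lap ginv (pdUp ginv p (Kt g k q)) x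
      = -(pdUp ginv p (v q) x + pdUp ginv p (v q) x) := by
    intro p q
    have e1 : lap ginv (pdUp ginv p (Kt g k q)) = pdUp ginv p (lap ginv (Kt g k q)) :=
      lap_pdUp_comm ginv p (smK q)
    have e2 : lap ginv (Kt g k q) = fun x => -(v q x + v q x) := funext fun x => hLK q x
    have e3 : pdUp ginv p (fun x => -(v q x + v q x))
        = fun x => -(pdUp ginv p (fun x => v q x + v q x) x) :=
      pdUp_neg ginv p
    have e4 : pdUp ginv p (fun x => v q x + v q x)
        = fun x => pdUp ginv p (v q) x + pdUp ginv p (v q) x :=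
      pdUp_add ginv p (smv q) (smv q)
    calc lap ginv (pdUp ginv p (Kt g k q)) x
        = pdUp ginv p (lap ginv (Kt g k q)) x := congrFun e1 x
      _ = pdUp ginv p (fun x => -(v q x + v q x)) x := by rw [e2]
      _ = -(pdUp ginv p (fun x => v q x + v q x) x) := congrFun e3 x
      _ = -(pdUp ginv p (v q) x + pdUp ginv p (v q) x) := by rw [e4]
  have h7a := h7 a b
  have h7b := h7 b a
  linarith
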